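/- Let m ≥ 1, let M, N ⊆ [m] with M ⊊ [m] and ∅ ≠ N ⊊ [m], and let D = aΔ_M^c + cΔ_N^c ⊆ E^m. Then the linear right-E-code C^R_D has length |D| = (2^m−2^{|M|})(2^m−2^{|N|}) and size 2^m, and the multiset {wt_Lee(c^R_D(v)) : v ∈ E^m} (with multiplicity over all 2^{2m} elements v ∈ E^m) consists of: (2^m−2^{|M|})(2^m−2^{|N|−1}) with multiplicity 2^m(2^{m−|N|}−2^{m−|M∪N|}); 2^m(2^m−2^{|M|})−2^{m+|N|−1} with multiplicity 2^m(2^{m−|M∪N|}−1); (2^m−2^{|M|})(2^m−2^{|N|}) with multiplicity 2^m(2^m−2^{m−|N|}); and 0 with multiplicity 2^m. -/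

import Mathlib

open Finset

/-- The simplicial complex `Δ_M ⊆ 𝔽₂^m` generated by `M ⊆ [m]`:
all vectors whose support is contained in `M`. -/
def deltaC {m : ℕ} (M : Finset (Fin m)) : Finset (Fin m → ZMod 2) :=
  Finset.univ.filter (fun w => ∀ i, w i ≠ 0 → i ∈ M)

/-- Dot product over `𝔽₂`. -/
def dotp {m : ℕ} (x y : Fin m → ZMod 2) : ZMod 2 := ∑ i, x i * y i

/-- The Gray map on a single element `a·s + c·t ↔ (s, t)` of `E = 𝔽₂ × 𝔽₂`:
`Φ(as + ct) = (t, s + t)`. -/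
def grayPair (e : ZMod 2 × ZMod 2) : Fin 2 → ZMod 2 := ![e.2, e.1 + e.2]

/-- The left codeword `c^L_D(v)` for `v = aα + cβ ↔ (α, β)`:
its coordinate at `d = (t₁, t₂) ∈ D` is `a(α·t₁) + c(β·t₁) ↔ (α·t₁, β·t₁)`. -/
def cwL {m : ℕ} (Ds : Finset ((Fin m → ZMod 2) × (Fin m → ZMod 2)))
    (v : (Fin m → ZMod 2) × (Fin m → ZMod 2)) :
    {d // d ∈ Ds} → ZMod 2 × ZMod 2 :=
  fun d => (dotp v.1 d.1.1, dotp v.2 d.1.1)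

/-- The Gray image `Φ(c^L_D(v)) ∈ 𝔽₂^{2|D|}` of the left codeword `c^L_D(v)`;
its Hamming weight (`hammingNorm`) is the Lee weight of `c^L_D(v)`. -/
def gcwL {m : ℕ} (Ds : Finset ((Fin m → ZMod 2) × (Fin m → ZMod 2)))
    (v : (Fin m → ZMod 2) × (Fin m → ZMod 2)) :
    {d // d ∈ Ds} × Fin 2 → ZMod 2 :=
  fun x => grayPair (cwL Ds v x.1) x.2

/-- The right codeword `c^R_D(v)` for `v = aα + cβ ↔ (α, β)`:
its coordinate at `d = (t₁, t₂) ∈ D` is `a(t₁·α) + c(t₂·α) ↔ (t₁·α, t₂·α)`. -/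
def cwR {m : ℕ} (Ds : Finset ((Fin m → ZMod 2) × (Fin m → ZMod 2)))
    (v : (Fin m → ZMod 2) × (Fin m → ZMod 2)) :
    {d // d ∈ Ds} → ZMod 2 × ZMod 2 :=
  fun d => (dotp d.1.1 v.1, dotp d.1.2 v.1)

/-- The Gray image `Φ(c^R_D(v)) ∈ 𝔽₂^{2|D|}` of the right codeword `c^R_D(v)`;
its Hamming weight (`hammingNorm`) is the Lee weight of `c^R_D(v)`. -/
def gcwR {m : ℕ} (Ds : Finset ((Fin m → ZMod 2) × (Fin m → ZMod 2)))
    (v : (Fin m → ZMod 2) × (Fin m → ZMod 2)) :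
    {d // d ∈ Ds} × Fin 2 → ZMod 2 :=
  fun x => grayPair (cwR Ds v x.1) x.2


section Helpers

lemma mem_deltaC {m : ℕ} {S : Finset (Fin m)} {w : Fin m → ZMod 2} :
    w ∈ deltaC S ↔ ∀ i, w i ≠ 0 → i ∈ S := by
  simp [deltaC]

lemma zmod2_ne_zero : ∀ {x : ZMod 2}, x ≠ 0 → x = 1 := by decide

lemma zmod2_add_self (x : ZMod 2) : x + x = 0 := by revert x; decide

lemma dotp_add_left {m : ℕ} (x y z : Fin m → ZMod 2) :
    dotp (x + y) z = dotp x z + dotp y z := by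
  simp [dotp, add_mul, Finset.sum_add_distrib]

lemma dotp_add_right {m : ℕ} (x y z : Fin m → ZMod 2) :
    dotp z (x + y) = dotp z x + dotp z y := by
  simp [dotp, mul_add, Finset.sum_add_distrib]

lemma dotp_zero_right {m : ℕ} (x : Fin m → ZMod 2) : dotp x 0 = 0 := by
  simp [dotp]

lemma dotp_single {m : ℕ} (i₀ : Fin m) (z : Fin m → ZMod 2) :
    dotp (Pi.single i₀ 1) z = z i₀ := by
  simp [dotp]
  rw [Finset.sum_eq_single i₀]
  · simp
  · intro b _ hb; simp [Pi.single_apply, hb]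
  · simp

lemma deltaC_add_single {m : ℕ} {S : Finset (Fin m)} {i₀ : Fin m} (hi₀S : i₀ ∈ S)
    {t : Fin m → ZMod 2} (ht : t ∈ deltaC S) : t + Pi.single i₀ 1 ∈ deltaC S := by
  rw [mem_deltaC]; intro i hi
  by_cases hii : i = i₀
  · exact hii ▸ hi₀S
  · apply mem_deltaC.mp ht i
    intro h0
    apply hi
    simp [Pi.add_apply, h0, Pi.single_apply, hii]

lemma add_single_add_single {m : ℕ} (i₀ : Fin m) (t : Fin m → ZMod 2) :
    t + Pi.single i₀ 1 + Pi.single i₀ 1 = t := by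
  rw [add_assoc]
  have : (Pi.single i₀ 1 : Fin m → ZMod 2) + Pi.single i₀ 1 = 0 := by
    funext i; exact zmod2_add_self _
  rw [this, add_zero]

lemma card_filter_eq {m : ℕ} (S : Finset (Fin m)) (α : Fin m → ZMod 2)
    (h : ∃ i ∈ S, α i ≠ 0) :
    ((deltaC S).filter fun t => dotp t α ≠ 0).card
      = ((deltaC S).filter fun t => dotp t α = 0).card := by
  classical
  obtain ⟨i₀, hi₀S, hi₀⟩ := h
  have hα : α i₀ = 1 := zmod2_ne_zero hi₀
  have key : ∀ t : Fin m → ZMod 2, dotp (t + Pi.single i₀ 1) α = dotp t α + 1 := by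
    intro t; rw [dotp_add_left, dotp_single, hα]
  apply Finset.card_bij' (i := fun t _ => t + Pi.single i₀ 1)
    (j := fun t _ => t + Pi.single i₀ 1)
  · intro t _; exact add_single_add_single i₀ t
  · intro t _; exact add_single_add_single i₀ t
  · intro t ht
    simp only [mem_filter] at ht ⊢
    refine ⟨deltaC_add_single hi₀S ht.1, ?_⟩
    rw [key, zmod2_ne_zero ht.2]; decide
  · intro t ht
    simp only [mem_filter] at ht ⊢
    refine ⟨deltaC_add_single hi₀S ht.1, ?_⟩
    rw [key, ht.2]; decide

lemma card_deltaC {m : ℕ} (S : Finset (Fin m)) : (deltaC S).card = 2 ^ S.card := by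
  classical
  have := Finset.card_bij' (s := deltaC S) (t := (Finset.univ : Finset (↥S → ZMod 2)))
    (i := fun w _ => fun i => w i.1)
    (j := fun x _ => fun i => if h : i ∈ S then x ⟨i, h⟩ else 0)
    (by intros; simp)
    (by intro x _; simp only [mem_deltaC]; intro i hi
        by_contra h
        simp [h] at hi)
    (by intro w hw; funext i
        by_cases h : i ∈ S
        · simp [h]
        · simp only [h, dif_neg, not_false_iff]
          by_contra hc
          exact h (mem_deltaC.mp hw i (fun e => hc e.symm)))
    (by intro x _; funext i; simp [i.2])
  rw [this]
  simp [Fintype.card_coe]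

lemma card_S_pos {m : ℕ} {S : Finset (Fin m)} {α : Fin m → ZMod 2}
    (h : ∃ i ∈ S, α i ≠ 0) : 1 ≤ S.card := by
  obtain ⟨i, hi, -⟩ := h
  exact Finset.card_pos.mpr ⟨i, hi⟩

lemma card_filter_ne {m : ℕ} (S : Finset (Fin m)) (α : Fin m → ZMod 2)
    (h : ∃ i ∈ S, α i ≠ 0) :
    ((deltaC S).filter fun t => dotp t α ≠ 0).card = 2 ^ (S.card - 1) := by
  classical
  have hsplit := Finset.card_filter_add_card_filter_not
    (s := deltaC S) (p := fun t => dotp t α ≠ 0)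
  simp only [not_not, card_deltaC] at hsplit
  have heq := card_filter_eq S α h
  have hc := card_S_pos h
  have hpow : 2 ^ S.card = 2 * 2 ^ (S.card - 1) := by
    rw [← pow_succ']
    congr 1
    omega
  omega

lemma card_filter_zero {m : ℕ} (S : Finset (Fin m)) (α : Fin m → ZMod 2)
    (h : ∀ i ∈ S, α i = 0) :
    ((deltaC S).filter fun t => dotp t α ≠ 0).card = 0 := by
  classical
  rw [Finset.card_eq_zero, Finset.filter_eq_empty_iff]
  intro t ht
  simp only [not_not]
  rw [dotp]
  apply Finset.sum_eq_zero
  intro i _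
  by_cases h0 : t i = 0
  · rw [h0, zero_mul]
  · rw [h i (mem_deltaC.mp ht i h0), mul_zero]

lemma deltaC_univ {m : ℕ} : deltaC (Finset.univ : Finset (Fin m)) = Finset.univ := by
  ext w; simp [mem_deltaC]

lemma card_filter_univ_ne {m : ℕ} (α : Fin m → ZMod 2) (h : α ≠ 0) :
    ((Finset.univ : Finset (Fin m → ZMod 2)).filter fun t => dotp t α ≠ 0).card
      = 2 ^ (m - 1) := by
  have h' : ∃ i ∈ (Finset.univ : Finset (Fin m)), α i ≠ 0 := by
    rcases Function.ne_iff.mp h with ⟨i, hi⟩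
    exact ⟨i, Finset.mem_univ i, hi⟩
  have := card_filter_ne Finset.univ α h'
  rwa [deltaC_univ, Finset.card_univ, Fintype.card_fin] at this

lemma filter_compl_split {m : ℕ} (S : Finset (Fin m)) (p : (Fin m → ZMod 2) → Prop)
    [DecidablePred p] :
    ((deltaC S)ᶜ.filter p).card + ((deltaC S).filter p).card
      = ((Finset.univ : Finset (Fin m → ZMod 2)).filter p).card := by
  classical
  have hu : (deltaC S)ᶜ ∪ deltaC S = Finset.univ := by ext x; simp; exact (em _).symm
  rw [← Finset.card_union_of_disjoint, ← Finset.filter_union, hu]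
  exact Finset.disjoint_filter_filter (disjoint_compl_left)

lemma card_filter_compl_ne_A {m : ℕ} (S : Finset (Fin m)) (α : Fin m → ZMod 2)
    (h : ∃ i ∈ S, α i ≠ 0) :
    ((deltaC S)ᶜ.filter fun t => dotp t α ≠ 0).card = 2 ^ (m - 1) - 2 ^ (S.card - 1) := by
  have hα : α ≠ 0 := by
    obtain ⟨i, -, hi⟩ := h
    intro h0; exact hi (by rw [h0]; rfl)
  have := filter_compl_split S (fun t => dotp t α ≠ 0)
  rw [card_filter_ne S α h, card_filter_univ_ne α hα] at this
  omega

lemma card_filter_compl_ne_B {m : ℕ} (S : Finset (Fin m)) (α : Fin m → ZMod 2)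
    (h : ∀ i ∈ S, α i = 0) (hα : α ≠ 0) :
    ((deltaC S)ᶜ.filter fun t => dotp t α ≠ 0).card = 2 ^ (m - 1) := by
  have := filter_compl_split S (fun t => dotp t α ≠ 0)
  rw [card_filter_zero S α h, card_filter_univ_ne α hα] at this
  omega

lemma card_compl_deltaC {m : ℕ} (S : Finset (Fin m)) :
    (deltaC S)ᶜ.card = 2 ^ m - 2 ^ S.card := by
  rw [Finset.card_compl, card_deltaC]
  congr 1
  simp

lemma card_filter_compl_zero {m : ℕ} (S : Finset (Fin m)) (α : Fin m → ZMod 2) :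
    ((deltaC S)ᶜ.filter fun t => dotp t α = 0).card
      = (2 ^ m - 2 ^ S.card) - ((deltaC S)ᶜ.filter fun t => dotp t α ≠ 0).card := by
  classical
  have hsplit := Finset.card_filter_add_card_filter_not
    (s := (deltaC S)ᶜ) (p := fun t => dotp t α ≠ 0)
  simp only [not_not] at hsplit
  rw [card_compl_deltaC] at hsplit
  omega

lemma weight_formula {m : ℕ} (D₁ D₂ : Finset (Fin m → ZMod 2))
    (v : (Fin m → ZMod 2) × (Fin m → ZMod 2)) :
    hammingNorm (gcwR (D₁ ×ˢ D₂) v) =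
      D₁.card * ((D₂.filter fun t => dotp t v.1 ≠ 0).card)
      + (D₁.filter fun t => dotp t v.1 = 0).card * ((D₂.filter fun t => dotp t v.1 ≠ 0).card)
      + (D₁.filter fun t => dotp t v.1 ≠ 0).card * ((D₂.filter fun t => dotp t v.1 = 0).card) := by
  classical
  set α := v.1 with hα
  set n₁ := (D₂.filter fun t => dotp t α ≠ 0).card with hn₁
  set n₀ := (D₂.filter fun t => dotp t α = 0).card with hn₀
  have step1 : hammingNorm (gcwR (D₁ ×ˢ D₂) v)
      = ∑ d ∈ (D₁ ×ˢ D₂).attach,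
          ((if dotp d.1.2 α ≠ 0 then 1 else 0)
            + (if dotp d.1.1 α + dotp d.1.2 α ≠ 0 then 1 else 0)) := by
    rw [hammingNorm, Finset.card_filter]
    rw [Fintype.sum_prod_type, Finset.univ_eq_attach]
    apply Finset.sum_congr rfl
    intro d _
    rw [Fin.sum_univ_two]
    simp [gcwR, cwR, grayPair]
    split_ifs <;> simp_all
  rw [step1]
  rw [Finset.sum_attach (D₁ ×ˢ D₂)
      (fun d => (if (dotp d.2 α : ZMod 2) ≠ 0 then 1 else 0)
            + (if dotp d.1 α + dotp d.2 α ≠ 0 then 1 else 0))]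
  rw [Finset.sum_product]
  have inner : ∀ t₁ ∈ D₁,
      (∑ t₂ ∈ D₂, ((if dotp t₂ α ≠ 0 then 1 else 0)
        + (if dotp t₁ α + dotp t₂ α ≠ 0 then 1 else 0)))
      = n₁ + (if dotp t₁ α = 0 then n₁ else n₀) := by
    intro t₁ _
    rw [Finset.sum_add_distrib]
    congr 1
    · rw [hn₁, Finset.card_filter]
    · by_cases h : dotp t₁ α = 0
      · rw [if_pos h, hn₁, Finset.card_filter]
        apply Finset.sum_congr rfl
        intro t₂ _
        rw [h, zero_add]
      · rw [if_neg h, zmod2_ne_zero h, hn₀, Finset.card_filter]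
        apply Finset.sum_congr rfl
        intro t₂ _
        refine if_congr ⟨?_, ?_⟩ rfl rfl
        · intro h1
          by_contra h2
          rw [zmod2_ne_zero h2] at h1
          exact h1 (by decide)
        · intro h1 h2
          rw [h1, add_zero] at h2
          simp at h2
  rw [Finset.sum_congr rfl inner, Finset.sum_add_distrib, Finset.sum_const,
    smul_eq_mul, Finset.sum_ite, Finset.sum_const, Finset.sum_const,
    smul_eq_mul, smul_eq_mul]
  simp only [ne_eq]
  ring

lemma arith1 (a b c : ℕ) (hb : b ≤ a) (hc : 2*c ≤ a) :
    (2*a-2*b)*a + ((2*a-2*b)-(a-b))*a + (a-b)*((2*a-2*c)-a) = (2*a-2*b)*(2*a-c) := by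
  have e1 : (2*a-2*b)-(a-b) = a-b := by omega
  have e2 : (2*a-2*c)-a = a-2*c := by omega
  rw [e1, e2]
  zify [hb, hc, show 2*b ≤ 2*a by omega, show c ≤ 2*a by omega]
  ring

lemma arith2 (a B C : ℕ) (hB : B ≤ a) (hC : C ≤ a) :
    (2*a-B)*a + ((2*a-B)-a)*a + a*((2*a-C)-a) = 2*a*(2*a-B) - a*C := by
  have e1 : (2*a-B)-a = a-B := by omega
  have e2 : (2*a-C)-a = a-C := by omega
  rw [e1, e2]
  have h1 : a*C ≤ 2*a*(2*a-B) := calc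
    a*C ≤ a*a := Nat.mul_le_mul_left a hC
    _ ≤ 2*a*(2*a-B) := Nat.mul_le_mul (by omega) (by omega)
  zify [hB, hC, show B ≤ 2*a by omega, h1]
  ring

lemma arith3 (D1 m0 m1 n T : ℕ) (hsum : m0 + m1 = D1) (hT : n * 2 = T) :
    D1 * n + m0 * n + m1 * n = D1 * T := by
  rw [add_assoc, show m0 * n + m1 * n = (m0 + m1) * n from (add_mul _ _ _).symm, hsum, ← hT]
  ring

lemma pow_split {k : ℕ} (hk : 1 ≤ k) : 2 ^ k = 2 * 2 ^ (k - 1) := by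
  rw [← pow_succ']
  congr 1
  omega

section ClassVals

variable {m : ℕ} (M N : Finset (Fin m))

/-- Class 3: `α` hits `N`. -/
lemma classval3 (hN1 : 1 ≤ N.card) (hNm : N.card < m) (α : Fin m → ZMod 2)
    (hα : ∃ i ∈ N, α i ≠ 0) :
    (deltaC M)ᶜ.card * (((deltaC N)ᶜ.filter fun t => dotp t α ≠ 0).card)
      + ((deltaC M)ᶜ.filter fun t => dotp t α = 0).card
          * (((deltaC N)ᶜ.filter fun t => dotp t α ≠ 0).card)
      + ((deltaC M)ᶜ.filter fun t => dotp t α ≠ 0).card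
          * (((deltaC N)ᶜ.filter fun t => dotp t α = 0).card)
    = (2 ^ m - 2 ^ M.card) * (2 ^ m - 2 ^ N.card) := by
  classical
  have hm : 1 ≤ m := by omega
  have hpm : (2:ℕ) ^ m = 2 * 2 ^ (m-1) := pow_split hm
  have hpN : (2:ℕ) ^ N.card = 2 * 2 ^ (N.card - 1) := pow_split hN1
  have hle : (2:ℕ) ^ (N.card - 1) ≤ 2 ^ (m - 1) :=
    Nat.pow_le_pow_right (by norm_num) (by omega)
  have hn₁ : ((deltaC N)ᶜ.filter fun t => dotp t α ≠ 0).card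
      = 2 ^ (m-1) - 2 ^ (N.card - 1) := card_filter_compl_ne_A N α hα
  have hn₀ : ((deltaC N)ᶜ.filter fun t => dotp t α = 0).card
      = 2 ^ (m-1) - 2 ^ (N.card - 1) := by
    rw [card_filter_compl_zero, hn₁]
    omega
  have hsum : ((deltaC M)ᶜ.filter fun t => dotp t α = 0).card
      + ((deltaC M)ᶜ.filter fun t => dotp t α ≠ 0).card = (deltaC M)ᶜ.card := by
    have := card_filter_compl_zero M α
    have h2 := card_compl_deltaC M
    have h3 := Finset.card_filter_le (deltaC M)ᶜ (fun t => dotp t α ≠ 0)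
    omega
  rw [hn₁, hn₀]
  rw [card_compl_deltaC] at hsum ⊢
  apply arith3 _ _ _ _ _ hsum
  omega

/-- Class 1: `α` misses `N` but hits `M`. -/
lemma classval1 (hN1 : 1 ≤ N.card) (hNm : N.card < m) (hMm : M.card < m)
    (α : Fin m → ZMod 2) (hαN : ∀ i ∈ N, α i = 0) (hαM : ∃ i ∈ M, α i ≠ 0) :
    (deltaC M)ᶜ.card * (((deltaC N)ᶜ.filter fun t => dotp t α ≠ 0).card)
      + ((deltaC M)ᶜ.filter fun t => dotp t α = 0).card
          * (((deltaC N)ᶜ.filter fun t => dotp t α ≠ 0).card)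
      + ((deltaC M)ᶜ.filter fun t => dotp t α ≠ 0).card
          * (((deltaC N)ᶜ.filter fun t => dotp t α = 0).card)
    = (2 ^ m - 2 ^ M.card) * (2 ^ m - 2 ^ (N.card - 1)) := by
  classical
  have hm : 1 ≤ m := by omega
  have hM1 : 1 ≤ M.card := card_S_pos hαM
  have hα0 : α ≠ 0 := by
    obtain ⟨i, -, hi⟩ := hαM
    intro h0; exact hi (by rw [h0]; rfl)
  have hpm : (2:ℕ) ^ m = 2 * 2 ^ (m-1) := pow_split hm
  have hpN : (2:ℕ) ^ N.card = 2 * 2 ^ (N.card - 1) := pow_split hN1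
  have hpM : (2:ℕ) ^ M.card = 2 * 2 ^ (M.card - 1) := pow_split hM1
  have hb : (2:ℕ) ^ (M.card - 1) ≤ 2 ^ (m - 1) :=
    Nat.pow_le_pow_right (by norm_num) (by omega)
  have hc : 2 * (2:ℕ) ^ (N.card - 1) ≤ 2 ^ (m - 1) := by
    rw [← hpN]
    exact Nat.pow_le_pow_right (by norm_num) (by omega)
  have hn₁ : ((deltaC N)ᶜ.filter fun t => dotp t α ≠ 0).card = 2 ^ (m-1) :=
    card_filter_compl_ne_B N α hαN hα0
  have hn₀ : ((deltaC N)ᶜ.filter fun t => dotp t α = 0).card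
      = (2 ^ m - 2 ^ N.card) - 2 ^ (m-1) := by
    rw [card_filter_compl_zero, hn₁]
  have hm₁ : ((deltaC M)ᶜ.filter fun t => dotp t α ≠ 0).card
      = 2 ^ (m-1) - 2 ^ (M.card - 1) := card_filter_compl_ne_A M α hαM
  have hm₀ : ((deltaC M)ᶜ.filter fun t => dotp t α = 0).card
      = (2 ^ m - 2 ^ M.card) - (2 ^ (m-1) - 2 ^ (M.card - 1)) := by
    rw [card_filter_compl_zero, hm₁]
  rw [hn₁, hn₀, hm₁, hm₀, card_compl_deltaC, hpm, hpN, hpM]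
  exact arith1 _ _ _ hb hc

/-- Class 2: `α ≠ 0` misses both `M` and `N`. -/
lemma classval2 (hN1 : 1 ≤ N.card) (hNm : N.card < m) (hMm : M.card < m)
    (α : Fin m → ZMod 2) (hαN : ∀ i ∈ N, α i = 0) (hαM : ∀ i ∈ M, α i = 0)
    (hα0 : α ≠ 0) :
    (deltaC M)ᶜ.card * (((deltaC N)ᶜ.filter fun t => dotp t α ≠ 0).card)
      + ((deltaC M)ᶜ.filter fun t => dotp t α = 0).card
          * (((deltaC N)ᶜ.filter fun t => dotp t α ≠ 0).card)
      + ((deltaC M)ᶜ.filter fun t => dotp t α ≠ 0).card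
          * (((deltaC N)ᶜ.filter fun t => dotp t α = 0).card)
    = 2 ^ m * (2 ^ m - 2 ^ M.card) - 2 ^ (m + N.card - 1) := by
  classical
  have hm : 1 ≤ m := by omega
  have hpm : (2:ℕ) ^ m = 2 * 2 ^ (m-1) := pow_split hm
  have hB : (2:ℕ) ^ M.card ≤ 2 ^ (m-1) :=
    Nat.pow_le_pow_right (by norm_num) (by omega)
  have hC : (2:ℕ) ^ N.card ≤ 2 ^ (m-1) :=
    Nat.pow_le_pow_right (by norm_num) (by omega)
  have hpNm : (2:ℕ) ^ (m + N.card - 1) = 2 ^ (m-1) * 2 ^ N.card := by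
    rw [← pow_add]
    congr 1
    omega
  have hn₁ : ((deltaC N)ᶜ.filter fun t => dotp t α ≠ 0).card = 2 ^ (m-1) :=
    card_filter_compl_ne_B N α hαN hα0
  have hn₀ : ((deltaC N)ᶜ.filter fun t => dotp t α = 0).card
      = (2 ^ m - 2 ^ N.card) - 2 ^ (m-1) := by
    rw [card_filter_compl_zero, hn₁]
  have hm₁ : ((deltaC M)ᶜ.filter fun t => dotp t α ≠ 0).card = 2 ^ (m-1) :=
    card_filter_compl_ne_B M α hαM hα0
  have hm₀ : ((deltaC M)ᶜ.filter fun t => dotp t α = 0).card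
      = (2 ^ m - 2 ^ M.card) - 2 ^ (m-1) := by
    rw [card_filter_compl_zero, hm₁]
  rw [hn₁, hn₀, hm₁, hm₀, card_compl_deltaC, hpNm, hpm]
  exact arith2 _ _ _ hB hC

end ClassVals

lemma deltaC_mono {m : ℕ} {S T : Finset (Fin m)} (h : S ⊆ T) :
    deltaC S ⊆ deltaC T := by
  intro w hw
  rw [mem_deltaC] at hw ⊢
  exact fun i hi => h (hw i hi)

lemma zero_mem_deltaC {m : ℕ} (S : Finset (Fin m)) : (0 : Fin m → ZMod 2) ∈ deltaC S := by
  rw [mem_deltaC]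
  intro i hi
  exact absurd rfl hi

lemma filter_fst {m : ℕ} (P : (Fin m → ZMod 2) → Prop) [DecidablePred P] :
    (Finset.univ : Finset ((Fin m → ZMod 2) × (Fin m → ZMod 2))).filter (fun v => P v.1)
      = (Finset.univ.filter P) ×ˢ Finset.univ := by
  ext ⟨x, y⟩
  simp

lemma card_univ_fun (m : ℕ) :
    (Finset.univ : Finset (Fin m → ZMod 2)).card = 2 ^ m := by
  simp [Finset.card_univ]

lemma hset3 {m : ℕ} (N : Finset (Fin m)) :
    (Finset.univ.filter (fun α : Fin m → ZMod 2 => ∃ i ∈ N, α i ≠ 0)) = (deltaC Nᶜ)ᶜ := by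
  ext α
  simp only [Finset.mem_filter, Finset.mem_univ, true_and, Finset.mem_compl, mem_deltaC]
  push_neg
  constructor
  · rintro ⟨i, hi, hαi⟩; exact ⟨i, hαi, by simpa using hi⟩
  · rintro ⟨i, hαi, hi⟩; exact ⟨i, by simpa using hi, hαi⟩

lemma hset1 {m : ℕ} (M N : Finset (Fin m)) :
    (Finset.univ.filter (fun α : Fin m → ZMod 2 =>
        (∃ i ∈ M, α i ≠ 0) ∧ ¬ ∃ i ∈ N, α i ≠ 0))
      = deltaC Nᶜ \ deltaC (M ∪ N)ᶜ := by
  ext α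
  simp only [Finset.mem_filter, Finset.mem_univ, true_and, Finset.mem_sdiff, mem_deltaC,
    Finset.mem_compl, Finset.mem_union]
  constructor
  · rintro ⟨⟨i, hiM, hαi⟩, hnN⟩
    constructor
    · intro j hαj hjN
      exact hnN ⟨j, hjN, hαj⟩
    · intro hall
      exact (hall i hαi) (Or.inl hiM)
  · rintro ⟨hN', hnot⟩
    push_neg at hnot
    obtain ⟨i, hαi, hi⟩ := hnot
    refine ⟨⟨i, ?_, hαi⟩, ?_⟩
    · rcases hi with h | h
      · exact h
      · exact absurd h (hN' i hαi)
    · rintro ⟨j, hjN, hαj⟩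
      exact hN' j hαj hjN

lemma hset2 {m : ℕ} (M N : Finset (Fin m)) :
    (Finset.univ.filter (fun α : Fin m → ZMod 2 =>
        ¬ α = 0 ∧ (¬ (∃ i ∈ M, α i ≠ 0) ∧ ¬ ∃ i ∈ N, α i ≠ 0)))
      = deltaC (M ∪ N)ᶜ \ {0} := by
  ext α
  simp only [Finset.mem_filter, Finset.mem_univ, true_and, Finset.mem_sdiff, mem_deltaC,
    Finset.mem_compl, Finset.mem_union, Finset.mem_singleton]
  constructor
  · rintro ⟨h0, hM', hN'⟩
    refine ⟨?_, h0⟩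
    intro i hi hor
    rcases hor with h | h
    · exact hM' ⟨i, h, hi⟩
    · exact hN' ⟨i, h, hi⟩
  · rintro ⟨hall, h0⟩
    refine ⟨h0, ?_, ?_⟩
    · rintro ⟨i, hiM, hαi⟩
      exact (hall i hαi) (Or.inl hiM)
    · rintro ⟨i, hiN, hαi⟩
      exact (hall i hαi) (Or.inr hiN)

lemma hset0 {m : ℕ} (M N : Finset (Fin m)) :
    (Finset.univ.filter (fun α : Fin m → ZMod 2 =>
        α = 0 ∧ (¬ (∃ i ∈ M, α i ≠ 0) ∧ ¬ ∃ i ∈ N, α i ≠ 0))) = {0} := by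
  ext α
  simp only [Finset.mem_filter, Finset.mem_univ, true_and, Finset.mem_singleton]
  constructor
  · rintro ⟨h0, -⟩; exact h0
  · rintro rfl
    refine ⟨rfl, ?_, ?_⟩ <;> · simp

end Helpers

theorem stmt_13 {m : ℕ} (hm : 1 ≤ m) (M N : Finset (Fin m))
    (hMu : M ≠ Finset.univ) (hN : N ≠ ∅) (hNu : N ≠ Finset.univ)
    (Ds : Finset ((Fin m → ZMod 2) × (Fin m → ZMod 2)))
    (hDs : Ds = (deltaC M)ᶜ ×ˢ (deltaC N)ᶜ) :
    Ds.card = (2 ^ m - 2 ^ M.card) * (2 ^ m - 2 ^ N.card) ∧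
    ((Finset.univ : Finset ((Fin m → ZMod 2) × (Fin m → ZMod 2))).image (cwR Ds)).card = 2 ^ m ∧
    (Finset.univ : Finset ((Fin m → ZMod 2) × (Fin m → ZMod 2))).val.map (fun v => hammingNorm (gcwR Ds v)) =
      Multiset.replicate (2 ^ m * (2 ^ (m - N.card) - 2 ^ (m - (M ∪ N).card)))
          ((2 ^ m - 2 ^ M.card) * (2 ^ m - 2 ^ (N.card - 1))) +
      Multiset.replicate (2 ^ m * (2 ^ (m - (M ∪ N).card) - 1))
          (2 ^ m * (2 ^ m - 2 ^ M.card) - 2 ^ (m + N.card - 1)) +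
      Multiset.replicate (2 ^ m * (2 ^ m - 2 ^ (m - N.card)))
          ((2 ^ m - 2 ^ M.card) * (2 ^ m - 2 ^ N.card)) +
      Multiset.replicate (2 ^ m)
          (0) := by
  classical
  have hN1 : 1 ≤ N.card := Finset.card_pos.mpr (Finset.nonempty_of_ne_empty hN)
  have hNm : N.card < m := by
    have := Finset.card_lt_card (Finset.ssubset_univ_iff.mpr hNu)
    simpa using this
  have hMm : M.card < m := by
    have := Finset.card_lt_card (Finset.ssubset_univ_iff.mpr hMu)
    simpa using this
  refine ⟨?_, ?_, ?_⟩
  · rw [hDs, Finset.card_product, card_compl_deltaC, card_compl_deltaC]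
  · -- image cardinality
    have hinj : Function.Injective (fun α : Fin m → ZMod 2 => cwR Ds (α, 0)) := by
      intro α α' h
      by_contra hne
      set γ := α + α' with hγdef
      have hγ : γ ≠ 0 := by
        intro h0
        apply hne
        have key : ∀ x y : ZMod 2, x + y = 0 → x = y := by decide
        funext i
        exact key _ _ (congrFun h0 i)
      -- find t₁ in (deltaC M)ᶜ with dotp t₁ γ ≠ 0
      have hcard : 0 < ((deltaC M)ᶜ.filter fun t => dotp t γ ≠ 0).card := by
        by_cases hM : ∃ i ∈ M, γ i ≠ 0
        · rw [card_filter_compl_ne_A M γ hM]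
          have hM1 : 1 ≤ M.card := card_S_pos hM
          have : (2:ℕ) ^ (M.card - 1) < 2 ^ (m-1) :=
            Nat.pow_lt_pow_right (by norm_num) (by omega)
          omega
        · push_neg at hM
          rw [card_filter_compl_ne_B M γ hM hγ]
          positivity
      obtain ⟨t₁, ht₁⟩ := Finset.card_pos.mp hcard
      rw [Finset.mem_filter] at ht₁
      have hcard2 : 0 < (deltaC N)ᶜ.card := by
        rw [card_compl_deltaC]
        have : (2:ℕ) ^ N.card < 2 ^ m := Nat.pow_lt_pow_right (by norm_num) hNm
        omega
      obtain ⟨t₂, ht₂⟩ := Finset.card_pos.mp hcard2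
      have hd : (t₁, t₂) ∈ Ds := by
        rw [hDs, Finset.mem_product]
        exact ⟨ht₁.1, ht₂⟩
      have := congrFun h ⟨(t₁, t₂), hd⟩
      have h1 : dotp t₁ α = dotp t₁ α' := congrArg Prod.fst this
      apply ht₁.2
      rw [hγdef, dotp_add_right, h1]
      exact zmod2_add_self _
    have himg : (Finset.univ : Finset ((Fin m → ZMod 2) × (Fin m → ZMod 2))).image (cwR Ds)
        = Finset.univ.image (fun α : Fin m → ZMod 2 => cwR Ds (α, 0)) := by
      ext y
      simp only [Finset.mem_image]
      constructor
      · rintro ⟨v, -, rfl⟩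
        exact ⟨v.1, Finset.mem_univ _, rfl⟩
      · rintro ⟨α, -, rfl⟩
        exact ⟨(α, 0), Finset.mem_univ _, rfl⟩
    rw [himg, Finset.card_image_of_injective _ hinj, card_univ_fun]
  · -- multiset of weights
    set t := (Finset.univ : Finset ((Fin m → ZMod 2) × (Fin m → ZMod 2))).val with ht
    set f := fun v : (Fin m → ZMod 2) × (Fin m → ZMod 2) => hammingNorm (gcwR Ds v) with hf
    set P3 := fun v : (Fin m → ZMod 2) × (Fin m → ZMod 2) => ∃ i ∈ N, v.1 i ≠ 0 with hP3
    set PM := fun v : (Fin m → ZMod 2) × (Fin m → ZMod 2) => ∃ i ∈ M, v.1 i ≠ 0 with hPM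
    set P0 := fun v : (Fin m → ZMod 2) × (Fin m → ZMod 2) => v.1 = 0 with hP0
    have d1 : t = Multiset.filter P3 t + Multiset.filter (fun v => ¬ P3 v) t :=
      (Multiset.filter_add_not _ _).symm
    have d2 : Multiset.filter (fun v => ¬ P3 v) t
        = Multiset.filter (fun v => PM v ∧ ¬ P3 v) t
          + Multiset.filter (fun v => ¬ PM v ∧ ¬ P3 v) t := by
      rw [← Multiset.filter_filter PM, ← Multiset.filter_filter (fun v => ¬ PM v)]
      exact (Multiset.filter_add_not _ _).symm
    have d3 : Multiset.filter (fun v => ¬ PM v ∧ ¬ P3 v) t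
        = Multiset.filter (fun v => ¬ P0 v ∧ (¬ PM v ∧ ¬ P3 v)) t
          + Multiset.filter (fun v => P0 v ∧ (¬ PM v ∧ ¬ P3 v)) t := by
      rw [← Multiset.filter_filter (fun v => ¬ P0 v),
        ← Multiset.filter_filter (fun v => P0 v)]
      rw [add_comm]
      exact (Multiset.filter_add_not _ _).symm
    -- cardinalities of the filters
    have cardfilter : ∀ (P : ((Fin m → ZMod 2) × (Fin m → ZMod 2)) → Prop)
        [DecidablePred P], (Multiset.filter P t).card = (Finset.univ.filter P).card := by
      intro P _
      rw [ht, ← Finset.filter_val]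
      rfl
    have countP : ∀ (Q : (Fin m → ZMod 2) → Prop) [DecidablePred Q]
        (P : ((Fin m → ZMod 2) × (Fin m → ZMod 2)) → Prop) [DecidablePred P],
        (∀ v, P v ↔ Q v.1) →
        (Multiset.filter P t).card = (Finset.univ.filter Q).card * 2 ^ m := by
      intro Q _ P _ hPQ
      rw [cardfilter]
      have hprod : Finset.univ.filter P = (Finset.univ.filter Q) ×ˢ Finset.univ := by
        ext ⟨x, y⟩
        simp only [Finset.mem_filter, Finset.mem_product, Finset.mem_univ, true_and,
          and_true]
        exact hPQ (x, y)
      rw [hprod, Finset.card_product, card_univ_fun]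
    -- class 3 count
    have count3 : (Multiset.filter P3 t).card = 2 ^ m * (2 ^ m - 2 ^ (m - N.card)) := by
      rw [countP (fun α : Fin m → ZMod 2 => ∃ i ∈ N, α i ≠ 0) P3 (fun v => Iff.rfl)]
      rw [hset3 N, Finset.card_compl, card_deltaC, Finset.card_compl, Fintype.card_fin]
      have hF : Fintype.card (Fin m → ZMod 2) = 2 ^ m := by simp
      rw [hF]
      exact Nat.mul_comm _ _
    -- class 1 count
    have count1 : (Multiset.filter (fun v => PM v ∧ ¬ P3 v) t).card
        = 2 ^ m * (2 ^ (m - N.card) - 2 ^ (m - (M ∪ N).card)) := by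
      rw [countP (fun α : Fin m → ZMod 2 => (∃ i ∈ M, α i ≠ 0) ∧ ¬ ∃ i ∈ N, α i ≠ 0)
        (fun v => PM v ∧ ¬ P3 v) (fun v => Iff.rfl)]
      rw [hset1 M N, Finset.card_sdiff_of_subset (deltaC_mono (Finset.compl_subset_compl.mpr
        Finset.subset_union_right)), card_deltaC, card_deltaC,
        Finset.card_compl, Finset.card_compl, Fintype.card_fin]
      exact Nat.mul_comm _ _
    -- class 2 count
    have count2 : (Multiset.filter (fun v => ¬ P0 v ∧ (¬ PM v ∧ ¬ P3 v)) t).card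
        = 2 ^ m * (2 ^ (m - (M ∪ N).card) - 1) := by
      rw [countP (fun α : Fin m → ZMod 2 =>
          ¬ α = 0 ∧ (¬ (∃ i ∈ M, α i ≠ 0) ∧ ¬ ∃ i ∈ N, α i ≠ 0))
        (fun v => ¬ P0 v ∧ (¬ PM v ∧ ¬ P3 v)) (fun v => Iff.rfl)]
      rw [hset2 M N, Finset.card_sdiff_of_subset (by
          intro x hx
          rw [Finset.mem_singleton] at hx
          rw [hx]
          exact zero_mem_deltaC _),
        card_deltaC, Finset.card_singleton, Finset.card_compl, Fintype.card_fin]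
      exact Nat.mul_comm _ _
    -- class 0 count
    have count0 : (Multiset.filter (fun v => P0 v ∧ (¬ PM v ∧ ¬ P3 v)) t).card = 2 ^ m := by
      rw [countP (fun α : Fin m → ZMod 2 =>
          α = 0 ∧ (¬ (∃ i ∈ M, α i ≠ 0) ∧ ¬ ∃ i ∈ N, α i ≠ 0))
        (fun v => P0 v ∧ (¬ PM v ∧ ¬ P3 v)) (fun v => Iff.rfl)]
      rw [hset0 M N, Finset.card_singleton, one_mul]
    -- values on each class
    have val3 : ∀ v ∈ Multiset.filter P3 t,
        f v = (2 ^ m - 2 ^ M.card) * (2 ^ m - 2 ^ N.card) := by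
      intro v hv
      have hP := (Multiset.mem_filter.mp hv).2
      rw [hf]
      simp only
      rw [hDs, weight_formula]
      exact classval3 M N hN1 hNm v.1 hP
    have val1 : ∀ v ∈ Multiset.filter (fun v => PM v ∧ ¬ P3 v) t,
        f v = (2 ^ m - 2 ^ M.card) * (2 ^ m - 2 ^ (N.card - 1)) := by
      intro v hv
      have hP := (Multiset.mem_filter.mp hv).2
      rw [hf]
      simp only
      rw [hDs, weight_formula]
      have hαN : ∀ i ∈ N, v.1 i = 0 := by
        have := hP.2
        rw [hP3] at this
        push_neg at this
        simpa using this
      exact classval1 M N hN1 hNm hMm v.1 hαN hP.1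
    have val2 : ∀ v ∈ Multiset.filter (fun v => ¬ P0 v ∧ (¬ PM v ∧ ¬ P3 v)) t,
        f v = 2 ^ m * (2 ^ m - 2 ^ M.card) - 2 ^ (m + N.card - 1) := by
      intro v hv
      have hP := (Multiset.mem_filter.mp hv).2
      rw [hf]
      simp only
      rw [hDs, weight_formula]
      have hαN : ∀ i ∈ N, v.1 i = 0 := by
        have := hP.2.2
        rw [hP3] at this
        push_neg at this
        simpa using this
      have hαM : ∀ i ∈ M, v.1 i = 0 := by
        have := hP.2.1
        rw [hPM] at this
        push_neg at this
        simpa using this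
      exact classval2 M N hN1 hNm hMm v.1 hαN hαM hP.1
    have val0 : ∀ v ∈ Multiset.filter (fun v => P0 v ∧ (¬ PM v ∧ ¬ P3 v)) t,
        f v = 0 := by
      intro v hv
      have hP := (Multiset.mem_filter.mp hv).2
      have h0 : v.1 = 0 := hP.1
      rw [hf]
      simp only
      have : gcwR Ds v = 0 := by
        funext x
        rcases x with ⟨d, j⟩
        fin_cases j <;> simp [gcwR, cwR, grayPair, h0, dotp_zero_right]
      rw [this]
      simp [hammingNorm]
    -- assemble
    have key : Multiset.map f t
        = Multiset.replicate (2 ^ m * (2 ^ m - 2 ^ (m - N.card)))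
            ((2 ^ m - 2 ^ M.card) * (2 ^ m - 2 ^ N.card))
          + (Multiset.replicate (2 ^ m * (2 ^ (m - N.card) - 2 ^ (m - (M ∪ N).card)))
              ((2 ^ m - 2 ^ M.card) * (2 ^ m - 2 ^ (N.card - 1)))
            + (Multiset.replicate (2 ^ m * (2 ^ (m - (M ∪ N).card) - 1))
                (2 ^ m * (2 ^ m - 2 ^ M.card) - 2 ^ (m + N.card - 1))
              + Multiset.replicate (2 ^ m) 0)) := by
      conv_lhs => rw [d1]
      rw [Multiset.map_add]
      congr 1
      · apply Multiset.eq_replicate.mpr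
        refine ⟨?_, ?_⟩
        · rw [Multiset.card_map]; exact count3
        · intro b hb
          obtain ⟨v, hv, rfl⟩ := Multiset.mem_map.mp hb
          exact val3 v hv
      · rw [d2, Multiset.map_add]
        congr 1
        · apply Multiset.eq_replicate.mpr
          refine ⟨?_, ?_⟩
          · rw [Multiset.card_map]; exact count1
          · intro b hb
            obtain ⟨v, hv, rfl⟩ := Multiset.mem_map.mp hb
            exact val1 v hv
        · rw [d3, Multiset.map_add]
          congr 1
          · apply Multiset.eq_replicate.mpr
            refine ⟨?_, ?_⟩
            · rw [Multiset.card_map]; exact count2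
            · intro b hb
              obtain ⟨v, hv, rfl⟩ := Multiset.mem_map.mp hb
              exact val2 v hv
          · apply Multiset.eq_replicate.mpr
            refine ⟨?_, ?_⟩
            · rw [Multiset.card_map]; exact count0
            · intro b hb
              obtain ⟨v, hv, rfl⟩ := Multiset.mem_map.mp hb
              exact val0 v hv
    rw [show ((Finset.univ :
        Finset ((Fin m → ZMod 2) × (Fin m → ZMod 2))).val.map
        (fun v => hammingNorm (gcwR Ds v))) = Multiset.map f t from rfl, key]
    abel
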